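/- Let H be a weak Hopf algebra with bijective antipode, R = Im(Π^L), and A a left weak H-comodule algebra. Then the map s_A: R → A defined by s_A(Π^L(h)) = ε(1_{<-1>} h) 1_{<0>} is a well-defined unital k-algebra homomorphism, making A an R-ring. -/
import Mathlib

open TensorProduct LinearMap MulOpposite

noncomputable section
namespace DK

variable (k : Type*) [CommRing k] (H : Type*) [Ring H] [Algebra k H]

/-- Given `u = Σ xᵢ ⊗ bᵢ ∈ H ⊗ B` and `ε : H → k`, the linear map `g ↦ Σ ε(xᵢ * g) • bᵢ`. -/
def coPi (B : Type*) [AddCommGroup B] [Module k B] (ε : H →ₗ[k] k) (u : H ⊗[k] B) :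
    H →ₗ[k] B :=
  ((TensorProduct.lid k B).toLinearMap
      ∘ₗ LinearMap.rTensor B (ε ∘ₗ LinearMap.mul' k H)
      ∘ₗ (TensorProduct.assoc k H H B).symm.toLinearMap
      ∘ₗ LinearMap.lTensor H (TensorProduct.comm k B H).toLinearMap
      ∘ₗ (TensorProduct.assoc k H B H).toLinearMap)
    ∘ₗ TensorProduct.mk k (H ⊗[k] B) H u

/-- Given `u = Σ bᵢ ⊗ xᵢ ∈ B ⊗ H` and `ε : H → k`, the linear map `g ↦ Σ ε(g * xᵢ) • bᵢ`. -/
def coPiR (B : Type*) [AddCommGroup B] [Module k B] (ε : H →ₗ[k] k) (u : B ⊗[k] H) :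
    H →ₗ[k] B :=
  ((TensorProduct.rid k B).toLinearMap
      ∘ₗ LinearMap.lTensor B (ε ∘ₗ LinearMap.mul' k H ∘ₗ (TensorProduct.comm k H H).toLinearMap)
      ∘ₗ (TensorProduct.assoc k B H H).toLinearMap)
    ∘ₗ TensorProduct.mk k (B ⊗[k] H) H u

variable (Δ : H →ₗ[k] H ⊗[k] H) (ε : H →ₗ[k] k)

/-- `Π^L(g) = ε(1₍₁₎ g) • 1₍₂₎`. -/
def PiL : H →ₗ[k] H := coPi k H H ε (Δ 1)

/-- `Π^R(g) = ε(g 1₍₂₎) • 1₍₁₎`. -/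
def PiR : H →ₗ[k] H := coPiR k H H ε (Δ 1)

/-- the map `h₍₁₎ ε(g h₍₂₎)` as a function of the input of `Δ`, i.e.
`u = Σ aᵢ ⊗ bᵢ ↦ Σ ε(g bᵢ) • aᵢ`. -/
def PiRmap (g : H) : H ⊗[k] H →ₗ[k] H :=
  (TensorProduct.rid k H).toLinearMap ∘ₗ LinearMap.lTensor H (ε ∘ₗ LinearMap.mulLeft k g)

/-- `(a ⊗ b) ↦ ε(x a) * ε(b z)`. -/
def eps2 (x z : H) : H ⊗[k] H →ₗ[k] k :=
  (TensorProduct.lid k k).toLinearMap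
    ∘ₗ TensorProduct.map (ε ∘ₗ LinearMap.mulLeft k x) (ε ∘ₗ LinearMap.mulRight k z)

/-- `(a ⊗ b) ↦ ε(a z) * ε(x b)`. -/
def eps2' (x z : H) : H ⊗[k] H →ₗ[k] k :=
  (TensorProduct.lid k k).toLinearMap
    ∘ₗ TensorProduct.map (ε ∘ₗ LinearMap.mulRight k z) (ε ∘ₗ LinearMap.mulLeft k x)

/-- The weak bialgebra axioms for `(H, ·, Δ, ε)`: `Δ` is a multiplicative coassociative
counital coproduct, the weak counit axiom
`ε(xyz) = ε(x y₍₁₎) ε(y₍₂₎ z) = ε(x y₍₂₎) ε(y₍₁₎ z)` holds, and the weak unit axiom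
`(Δ ⊗ id)Δ(1) = (Δ(1) ⊗ 1)(1 ⊗ Δ(1)) = (1 ⊗ Δ(1))(Δ(1) ⊗ 1)` holds. -/
def IsWeakBialgebra : Prop :=
  (∀ x y : H, Δ (x * y) = Δ x * Δ y) ∧
  (∀ h : H, (TensorProduct.assoc k H H H) ((LinearMap.rTensor H Δ) (Δ h)) =
      (LinearMap.lTensor H Δ) (Δ h)) ∧
  (∀ h : H, (TensorProduct.lid k H) ((LinearMap.rTensor H ε) (Δ h)) = h) ∧
  (∀ h : H, (TensorProduct.rid k H) ((LinearMap.lTensor H ε) (Δ h)) = h) ∧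
  (∀ x y z : H, ε (x * y * z) = eps2 k H ε x z (Δ y)) ∧
  (∀ x y z : H, ε (x * y * z) = eps2' k H ε x z (Δ y)) ∧
  ((LinearMap.lTensor H Δ) (Δ 1) =
      (TensorProduct.assoc k H H H) ((Δ 1) ⊗ₜ[k] (1 : H)) * ((1 : H) ⊗ₜ[k] (Δ 1))) ∧
  ((LinearMap.lTensor H Δ) (Δ 1) =
      ((1 : H) ⊗ₜ[k] (Δ 1)) * (TensorProduct.assoc k H H H) ((Δ 1) ⊗ₜ[k] (1 : H)))

variable (S : H →ₗ[k] H)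

/-- The weak Hopf algebra axioms: `H` is a weak bialgebra with antipode `S` satisfying
`h₍₁₎ S(h₍₂₎) = Π^L(h)`, `S(h₍₁₎) h₍₂₎ = Π^R(h)` and `S(h₍₁₎) h₍₂₎ S(h₍₃₎) = S(h)`. -/
def IsWeakHopf : Prop :=
  IsWeakBialgebra k H Δ ε ∧
  (∀ h : H, LinearMap.mul' k H ((LinearMap.lTensor H S) (Δ h)) = PiL k H Δ ε h) ∧
  (∀ h : H, LinearMap.mul' k H ((LinearMap.rTensor H S) (Δ h)) = PiR k H Δ ε h) ∧
  (∀ h : H,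
    (LinearMap.mul' k H ∘ₗ LinearMap.lTensor H (LinearMap.mul' k H))
        ((TensorProduct.map S (TensorProduct.map LinearMap.id S))
          ((LinearMap.lTensor H Δ) (Δ h))) = S h)

end DK
end
noncomputable section
namespace DK
open TensorProduct LinearMap

variable (k : Type*) [CommRing k] (H : Type*) [Ring H] [Algebra k H]
  (Δ : H →ₗ[k] H ⊗[k] H) (ε : H →ₗ[k] k)
  (A : Type*) [Ring A] [Algebra k A] (ρ : A →ₗ[k] H ⊗[k] A)

/-- `1₂ ⊗ (1₋₁ ⊗ 1₀) ↦ 1₋₁ 1₂ ⊗ 1₀` (used in the weak unit axiom). -/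
def innerW : H ⊗[k] (H ⊗[k] A) →ₗ[k] H ⊗[k] A :=
  LinearMap.rTensor A (LinearMap.mul' k H ∘ₗ (TensorProduct.comm k H H).toLinearMap) ∘ₗ
    (TensorProduct.assoc k H H A).symm.toLinearMap

/-- `(A, ρ)` is a left weak `H`-comodule algebra: a coassociative counital left
`H`-comodule and an algebra with `ρ(a)ρ(b) = ρ(ab)` and
`(H ⊗ ρ)ρ(1) = 1₍₁₎ ⊗ 1₍₋₁₎1₍₂₎ ⊗ 1₍₀₎`. -/
def IsWeakComoduleAlgebra : Prop :=
  (∀ a : A, (TensorProduct.assoc k H H A) ((LinearMap.rTensor A Δ) (ρ a)) =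
      (LinearMap.lTensor H ρ) (ρ a)) ∧
  (∀ a : A, (TensorProduct.lid k A) ((LinearMap.rTensor A ε) (ρ a)) = a) ∧
  (∀ a b : A, ρ (a * b) = ρ a * ρ b) ∧
  ((LinearMap.lTensor H ρ) (ρ 1) =
    (LinearMap.lTensor H (innerW k H A))
      ((TensorProduct.assoc k H H (H ⊗[k] A)) ((Δ 1) ⊗ₜ[k] (ρ 1))))

/-- The source map `s_A : h ↦ ε(1₍₋₁₎ h) 1₍₀₎`, i.e. `s_A(Π^L h) = ε(1₍₋₁₎ h) 1₍₀₎`. -/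
def sAlin : H →ₗ[k] A := coPi k H A ε (ρ 1)

end DK
end

section Aux
open TensorProduct LinearMap
variable {k : Type*} [CommRing k] {H : Type*} [Ring H] [Algebra k H]

lemma coPi_tmul {B : Type*} [AddCommGroup B] [Module k B] (ε : H →ₗ[k] k)
    (x : H) (b : B) (g : H) :
    DK.coPi k H B ε (x ⊗ₜ[k] b) g = ε (x * g) • b := by
  simp [DK.coPi]

lemma coPi_sum {B : Type*} [AddCommGroup B] [Module k B] (ε : H →ₗ[k] k)
    {ι : Type*} (s : Finset ι) (f : ι → H ⊗[k] B) (g : H) :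
    DK.coPi k H B ε (∑ i ∈ s, f i) g = ∑ i ∈ s, DK.coPi k H B ε (f i) g := by
  simp [DK.coPi, TensorProduct.sum_tmul, map_sum]

lemma coPiR_tmul {B : Type*} [AddCommGroup B] [Module k B] (ε : H →ₗ[k] k)
    (b : B) (x : H) (g : H) :
    DK.coPiR k H B ε (b ⊗ₜ[k] x) g = ε (g * x) • b := by
  simp [DK.coPiR]

lemma coPiR_sum {B : Type*} [AddCommGroup B] [Module k B] (ε : H →ₗ[k] k)
    {ι : Type*} (s : Finset ι) (f : ι → B ⊗[k] H) (g : H) :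
    DK.coPiR k H B ε (∑ i ∈ s, f i) g = ∑ i ∈ s, DK.coPiR k H B ε (f i) g := by
  simp [DK.coPiR, TensorProduct.sum_tmul, map_sum]

end Aux

set_option maxHeartbeats 1000000
set_option synthInstance.maxHeartbeats 400000
set_option linter.unusedVariables false

/-- Let `H` be a weak Hopf algebra with bijective antipode, `R = Im Π^L`, and
`A` a left weak `H`-comodule algebra.  Then `s_A : R → A`, `s_A(Π^L h) = ε(1₍₋₁₎ h) 1₍₀₎`,
is a well-defined unital `k`-algebra homomorphism, making `A` an `R`-ring.
(`s_A` is realised as the `k`-linear map `sAlin : H → A`; well-definedness says that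
`sAlin` only depends on `Π^L h`, and the algebra map property is multiplicativity on
`R = Im Π^L` together with unitality.) -/
theorem stmt11 (k : Type*) [CommRing k] (H : Type*) [Ring H] [Algebra k H]
    (Δ : H →ₗ[k] H ⊗[k] H) (ε : H →ₗ[k] k) (S Sinv : H →ₗ[k] H)
    (A : Type*) [Ring A] [Algebra k A] (ρ : A →ₗ[k] H ⊗[k] A)
    (hwh : DK.IsWeakHopf k H Δ ε S)
    (hinv1 : ∀ h, Sinv (S h) = h) (hinv2 : ∀ h, S (Sinv h) = h)
    (hA : DK.IsWeakComoduleAlgebra k H Δ ε A ρ) :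
    (∀ g h : H, DK.PiL k H Δ ε g = DK.PiL k H Δ ε h →
      DK.sAlin k H ε A ρ g = DK.sAlin k H ε A ρ h) ∧
    (DK.sAlin k H ε A ρ (1 : H) = 1) ∧
    (∀ x y : H, x ∈ Set.range (DK.PiL k H Δ ε) → y ∈ Set.range (DK.PiL k H Δ ε) →
      DK.sAlin k H ε A ρ (x * y) = DK.sAlin k H ε A ρ x * DK.sAlin k H ε A ρ y) := by
  obtain ⟨⟨hmul, hco, hcl, hcr, he2, he2', hw1, hw2⟩, hSL, hSR, hS3⟩ := hwh
  obtain ⟨hAco, hAcounit, hAmul, hAw⟩ := hA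
  obtain ⟨S1, hS1⟩ := TensorProduct.exists_finset (R := k) (Δ 1)
  obtain ⟨S2, hS2⟩ := TensorProduct.exists_finset (R := k) (ρ 1)
  -- sum formulas for the structure maps
  have hPiL : ∀ g : H, DK.PiL k H Δ ε g = ∑ p ∈ S1, ε (p.1 * g) • p.2 := by
    intro g
    rw [DK.PiL, hS1, coPi_sum]
    exact Finset.sum_congr rfl fun p _ => coPi_tmul ε p.1 p.2 g
  have hPiR : ∀ g : H, DK.PiR k H Δ ε g = ∑ p ∈ S1, ε (g * p.2) • p.1 := by
    intro g
    rw [DK.PiR, hS1, coPiR_sum]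
    exact Finset.sum_congr rfl fun p _ => coPiR_tmul ε p.1 p.2 g
  have hsA : ∀ g : H, DK.sAlin k H ε A ρ g = ∑ q ∈ S2, ε (q.1 * g) • q.2 := by
    intro g
    rw [DK.sAlin, hS2, coPi_sum]
    exact Finset.sum_congr rfl fun q _ => coPi_tmul ε q.1 q.2 g
  -- F1 : ε (w * Π^L g) = ε (w * g)
  have hF1 : ∀ w g : H, ε (w * DK.PiL k H Δ ε g) = ε (w * g) := by
    intro w g
    have h := he2' w 1 g
    rw [mul_one] at h
    rw [hPiL, Finset.mul_sum, map_sum, h, hS1, map_sum]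
    refine Finset.sum_congr rfl fun p _ => ?_
    simp [DK.eps2', mul_smul_comm, smul_eq_mul]
  -- idempotence of Π^L
  have hidem : ∀ g : H, DK.PiL k H Δ ε (DK.PiL k H Δ ε g) = DK.PiL k H Δ ε g := by
    intro g
    rw [hPiL (DK.PiL k H Δ ε g)]
    rw [show (∑ p ∈ S1, ε (p.1 * DK.PiL k H Δ ε g) • p.2) = ∑ p ∈ S1, ε (p.1 * g) • p.2
      from Finset.sum_congr rfl fun p _ => by rw [hF1]]
    exact (hPiL g).symm
  refine ⟨?_, ?_, ?_⟩
  · -- well-definedness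
    intro g h hgh
    have key : ∀ g : H, DK.sAlin k H ε A ρ g = DK.sAlin k H ε A ρ (DK.PiL k H Δ ε g) := by
      intro g
      rw [hsA, hsA]
      exact Finset.sum_congr rfl fun q _ => by rw [hF1]
    rw [key g, key h, hgh]
  · -- unitality
    have h := hAcounit 1
    rw [hS2] at h
    rw [hsA, ← h]
    simp [map_sum]
  · -- multiplicativity on R
    -- weak unit axiom of the comodule algebra, in sum form
    have hE : ∑ q ∈ S2, q.1 ⊗ₜ[k] (ρ q.2)
        = ∑ p ∈ S1, ∑ q ∈ S2, p.1 ⊗ₜ[k] ((q.1 * p.2) ⊗ₜ[k] q.2) := by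
      have h := hAw
      rw [hS1, hS2] at h
      rw [TensorProduct.sum_tmul] at h
      simp only [TensorProduct.tmul_sum, map_sum, lTensor_tmul, TensorProduct.assoc_tmul,
        DK.innerW, coe_comp, LinearEquiv.coe_coe, Function.comp_apply,
        TensorProduct.assoc_symm_tmul, rTensor_tmul, TensorProduct.comm_tmul,
        mul'_apply] at h
      exact h
    -- ρ(1) = (Π^R ⊗ id)(ρ(1))
    have hE3 : ∑ q ∈ S2, q.1 ⊗ₜ[k] q.2
        = ∑ q ∈ S2, (DK.PiR k H Δ ε q.1) ⊗ₜ[k] q.2 := by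
      have h := congrArg (LinearMap.lTensor H
        ((TensorProduct.lid k A).toLinearMap ∘ₗ LinearMap.rTensor A ε)) hE
      simp only [map_sum, lTensor_tmul, coe_comp, LinearEquiv.coe_coe,
        Function.comp_apply, rTensor_tmul, lid_tmul, tmul_smul] at h
      rw [show (∑ q ∈ S2, q.1 ⊗ₜ[k] ((TensorProduct.lid k A) ((LinearMap.rTensor A ε) (ρ q.2))))
          = ∑ q ∈ S2, q.1 ⊗ₜ[k] q.2 from Finset.sum_congr rfl fun q _ => by rw [hAcounit]] at h
      rw [h, Finset.sum_comm]
      refine Finset.sum_congr rfl fun q _ => ?_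
      rw [hPiR, TensorProduct.sum_tmul]
      exact Finset.sum_congr rfl fun p _ => by
        rw [TensorProduct.smul_tmul']
    -- ρ ∘ s_A
    have hF5 : ∀ x : H, ρ (DK.sAlin k H ε A ρ x)
        = ∑ q ∈ S2, (q.1 * DK.PiL k H Δ ε x) ⊗ₜ[k] q.2 := by
      intro x
      have h := congrArg ((TensorProduct.lid k (H ⊗[k] A)).toLinearMap
        ∘ₗ LinearMap.rTensor (H ⊗[k] A) (ε ∘ₗ LinearMap.mulRight k x)) hE
      simp only [map_sum, coe_comp, LinearEquiv.coe_coe, Function.comp_apply,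
        rTensor_tmul, lid_tmul, mulRight_apply] at h
      rw [hsA, map_sum]
      calc ∑ q ∈ S2, ρ (ε (q.1 * x) • q.2)
          = ∑ q ∈ S2, ε (q.1 * x) • ρ q.2 := by
            exact Finset.sum_congr rfl fun q _ => map_smul ρ _ _
        _ = ∑ p ∈ S1, ∑ q ∈ S2, ε (p.1 * x) • ((q.1 * p.2) ⊗ₜ[k] q.2) := h
        _ = ∑ q ∈ S2, (q.1 * DK.PiL k H Δ ε x) ⊗ₜ[k] q.2 := by
            rw [Finset.sum_comm]
            refine Finset.sum_congr rfl fun q _ => ?_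
            rw [hPiL, Finset.mul_sum, TensorProduct.sum_tmul]
            refine Finset.sum_congr rfl fun p _ => ?_
            rw [mul_smul_comm, TensorProduct.smul_tmul']
    -- commutation of Π^L and Π^R
    have hcomm : ∀ a b : H,
        DK.PiL k H Δ ε a * DK.PiR k H Δ ε b = DK.PiR k H Δ ε b * DK.PiL k H Δ ε a := by
      intro a b
      have h := hw1.symm.trans hw2
      rw [hS1] at h
      rw [show (TensorProduct.assoc k H H H) ((∑ p ∈ S1, p.1 ⊗ₜ[k] p.2) ⊗ₜ[k] (1:H))
            = ∑ p ∈ S1, p.1 ⊗ₜ[k] (p.2 ⊗ₜ[k] (1:H)) by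
          rw [TensorProduct.sum_tmul, map_sum]
          exact Finset.sum_congr rfl fun p _ => by rw [TensorProduct.assoc_tmul],
        TensorProduct.tmul_sum, Finset.sum_mul_sum, Finset.sum_mul_sum] at h
      have e1 : ∀ p r : H × H,
          (p.1 ⊗ₜ[k] (p.2 ⊗ₜ[k] (1:H))) * ((1:H) ⊗ₜ[k] (r.1 ⊗ₜ[k] r.2))
            = p.1 ⊗ₜ[k] ((p.2 * r.1) ⊗ₜ[k] r.2) := by
        intro p r
        rw [Algebra.TensorProduct.tmul_mul_tmul, Algebra.TensorProduct.tmul_mul_tmul,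
          mul_one, one_mul]
      have e2 : ∀ p r : H × H,
          ((1:H) ⊗ₜ[k] (p.1 ⊗ₜ[k] p.2)) * (r.1 ⊗ₜ[k] (r.2 ⊗ₜ[k] (1:H)))
            = r.1 ⊗ₜ[k] ((p.1 * r.2) ⊗ₜ[k] p.2) := by
        intro p r
        rw [Algebra.TensorProduct.tmul_mul_tmul, Algebra.TensorProduct.tmul_mul_tmul,
          one_mul, mul_one]
      simp only [e1, e2] at h
      set φ : H ⊗[k] (H ⊗[k] H) →ₗ[k] H := (TensorProduct.lid k H).toLinearMap
        ∘ₗ LinearMap.rTensor H (ε ∘ₗ LinearMap.mulRight k a)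
        ∘ₗ LinearMap.lTensor H ((TensorProduct.rid k H).toLinearMap
            ∘ₗ LinearMap.lTensor H (ε ∘ₗ LinearMap.mulLeft k b)) with hφ
      have hφval : ∀ u v w : H, φ (u ⊗ₜ[k] (v ⊗ₜ[k] w)) = (ε (u * a) * ε (b * w)) • v := by
        intro u v w
        simp [hφ, smul_smul, mul_comm]
      have h2 := congrArg φ h
      simp only [map_sum, hφval] at h2
      rw [hPiL, hPiR, Finset.sum_mul_sum, Finset.sum_mul_sum]
      calc ∑ p ∈ S1, ∑ r ∈ S1, (ε (p.1 * a) • p.2) * (ε (b * r.2) • r.1)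
          = ∑ p ∈ S1, ∑ r ∈ S1, (ε (p.1 * a) * ε (b * r.2)) • (p.2 * r.1) := by
            refine Finset.sum_congr rfl fun p _ => Finset.sum_congr rfl fun r _ => ?_
            rw [smul_mul_assoc, mul_smul_comm, smul_smul]
        _ = ∑ p ∈ S1, ∑ r ∈ S1, (ε (r.1 * a) * ε (b * p.2)) • (p.1 * r.2) := h2
        _ = ∑ p ∈ S1, ∑ r ∈ S1, (ε (b * p.2) • p.1) * (ε (r.1 * a) • r.2) := by
            refine Finset.sum_congr rfl fun p _ => Finset.sum_congr rfl fun r _ => ?_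
            rw [smul_mul_assoc, mul_smul_comm, smul_smul, mul_comm (ε (r.1 * a))]
    rintro x y ⟨g, rfl⟩ ⟨g', rfl⟩
    -- second bridge map
    have hb2 : ∀ w z : H, ∑ r ∈ S2, ε (w * r.1 * z) • r.2
        = ∑ r ∈ S2, ε (w * DK.PiR k H Δ ε r.1 * z) • r.2 := by
      intro w z
      have h := congrArg ((TensorProduct.lid k A).toLinearMap
        ∘ₗ LinearMap.rTensor A (ε ∘ₗ LinearMap.mulRight k z ∘ₗ LinearMap.mulLeft k w)) hE3
      simp only [map_sum, coe_comp, LinearEquiv.coe_coe, Function.comp_apply,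
        rTensor_tmul, lid_tmul, mulRight_apply, mulLeft_apply] at h
      exact h
    have h1 : ρ (DK.sAlin k H ε A ρ (DK.PiL k H Δ ε g) * DK.sAlin k H ε A ρ (DK.PiL k H Δ ε g'))
        = ∑ q ∈ S2, ∑ r ∈ S2,
            ((q.1 * DK.PiL k H Δ ε g) * (r.1 * DK.PiL k H Δ ε g')) ⊗ₜ[k] (q.2 * r.2) := by
      rw [hAmul, hF5, hF5, hidem g, hidem g', Finset.sum_mul_sum]
      exact Finset.sum_congr rfl fun q _ => Finset.sum_congr rfl fun r _ =>
        Algebra.TensorProduct.tmul_mul_tmul _ _ _ _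
    have hprod : DK.sAlin k H ε A ρ (DK.PiL k H Δ ε g) * DK.sAlin k H ε A ρ (DK.PiL k H Δ ε g')
        = ∑ q ∈ S2, ∑ r ∈ S2,
            ε ((q.1 * DK.PiL k H Δ ε g) * (r.1 * DK.PiL k H Δ ε g')) • (q.2 * r.2) := by
      have h2 := hAcounit (DK.sAlin k H ε A ρ (DK.PiL k H Δ ε g)
        * DK.sAlin k H ε A ρ (DK.PiL k H Δ ε g'))
      rw [h1] at h2
      rw [← h2]
      simp [map_sum]
    have hE2 : ∑ q ∈ S2, q.1 ⊗ₜ[k] q.2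
        = ∑ q ∈ S2, ∑ r ∈ S2, (q.1 * r.1) ⊗ₜ[k] (q.2 * r.2) := by
      have h : (ρ (1:A)) = ρ 1 * ρ 1 := by rw [← hAmul, one_mul]
      rw [hS2, Finset.sum_mul_sum] at h
      exact h.trans (Finset.sum_congr rfl fun q _ => Finset.sum_congr rfl fun r _ =>
        Algebra.TensorProduct.tmul_mul_tmul _ _ _ _)
    have hsAxy : DK.sAlin k H ε A ρ (DK.PiL k H Δ ε g * DK.PiL k H Δ ε g')
        = ∑ q ∈ S2, ∑ r ∈ S2,
            ε (q.1 * r.1 * (DK.PiL k H Δ ε g * DK.PiL k H Δ ε g')) • (q.2 * r.2) := by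
      have h := congrArg ((TensorProduct.lid k A).toLinearMap ∘ₗ LinearMap.rTensor A
        (ε ∘ₗ LinearMap.mulRight k (DK.PiL k H Δ ε g * DK.PiL k H Δ ε g'))) hE2
      simp only [map_sum, coe_comp, LinearEquiv.coe_coe, Function.comp_apply,
        rTensor_tmul, lid_tmul, mulRight_apply] at h
      rw [hsA]
      exact h
    rw [hsAxy, hprod]
    refine (Finset.sum_congr rfl fun q _ => ?_).symm
    calc ∑ r ∈ S2, ε ((q.1 * DK.PiL k H Δ ε g) * (r.1 * DK.PiL k H Δ ε g')) • (q.2 * r.2)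
        = q.2 * ∑ r ∈ S2, ε (q.1 * DK.PiL k H Δ ε g * r.1 * DK.PiL k H Δ ε g') • r.2 := by
          rw [Finset.mul_sum]
          refine Finset.sum_congr rfl fun r _ => ?_
          rw [mul_smul_comm, mul_assoc (q.1 * DK.PiL k H Δ ε g) r.1 (DK.PiL k H Δ ε g')]
      _ = q.2 * ∑ r ∈ S2,
            ε (q.1 * r.1 * (DK.PiL k H Δ ε g * DK.PiL k H Δ ε g')) • r.2 := by
          rw [hb2 (q.1 * DK.PiL k H Δ ε g) (DK.PiL k H Δ ε g'),
            hb2 q.1 (DK.PiL k H Δ ε g * DK.PiL k H Δ ε g')]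
          congr 1
          refine Finset.sum_congr rfl fun r _ => ?_
          rw [mul_assoc q.1 (DK.PiL k H Δ ε g) (DK.PiR k H Δ ε r.1), hcomm g r.1,
            ← mul_assoc q.1 (DK.PiR k H Δ ε r.1) (DK.PiL k H Δ ε g),
            mul_assoc (q.1 * DK.PiR k H Δ ε r.1) (DK.PiL k H Δ ε g) (DK.PiL k H Δ ε g')]
      _ = ∑ r ∈ S2,
            ε (q.1 * r.1 * (DK.PiL k H Δ ε g * DK.PiL k H Δ ε g')) • (q.2 * r.2) := by
          rw [Finset.mul_sum]
          exact Finset.sum_congr rfl fun r _ => by rw [mul_smul_comm]
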